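/- Let g ∈ {i, j, k} and let H = {1, −1, g, −g} be the corresponding cyclic subgroup of order 4 of Q₈. For d ∈ {1, 3}, every homogeneous element of degree d of the subalgebra A that is fixed by the action of every element of H can be written as u + g·u for some homogeneous element u ∈ A of degree d with zero constant term. -/

import Mathlib

set_option synthInstance.maxHeartbeats 1000000
set_option maxHeartbeats 1000000

open MvPolynomial QuaternionGroup

/-- The quaternion group `Q₈ = {1, −1, i, −i, j, −j, k, −k}` of order `8`.
Concretely, `1 = a 0`, `−1 = a 2`, `i = a 1`, `−i = a 3`, `j = xa 0`, `−j = xa 2`,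
`k = xa 3`, `−k = xa 1`. -/
abbrev Q8 : Type := QuaternionGroup 2

/-- The polynomial ring `R = ℤ[u_g : g ∈ Q₈]`. -/
abbrev R8 : Type := MvPolynomial Q8 ℤ

/-- The action of `g ∈ Q₈` on `R` by the `ℤ`-algebra automorphism permuting the
variables by left translation: `g • u_h = u_{g h}`. -/
noncomputable def act (g : Q8) : R8 →ₐ[ℤ] R8 :=
  rename (fun h : Q8 => g * h)

noncomputable def eV : R8 := X (a 0)
noncomputable def e'V : R8 := X (a 2)
noncomputable def xV : R8 := X (a 1)
noncomputable def x'V : R8 := X (a 3)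
noncomputable def yV : R8 := X (xa 0)
noncomputable def y'V : R8 := X (xa 2)
noncomputable def zV : R8 := X (xa 3)
noncomputable def z'V : R8 := X (xa 1)

/-- The polynomial `w = xyz + x′y′z′ + e′zy′ + ez′y + z′e′x + zex′ + yx′e′ + y′xe`. -/
noncomputable def w : R8 :=
  xV * yV * zV + x'V * y'V * z'V + e'V * zV * y'V + eV * z'V * yV
    + z'V * e'V * xV + zV * eV * x'V + yV * x'V * e'V + y'V * xV * eV


/-- The `ℤ`-subalgebra `A ⊆ R` generated by `e+e′, x+x′, y+y′, z+z′`. -/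
noncomputable def Asub : Subalgebra ℤ R8 :=
  Algebra.adjoin ℤ ({eV + e'V, xV + x'V, yV + y'V, zV + z'V} : Set R8)

/-! ### Auxiliary material -/

/-- The four generators of `Asub`, as a function on `Fin 4`. -/
noncomputable def gens : Fin 4 → R8 := ![eV + e'V, xV + x'V, yV + y'V, zV + z'V]

/-- Evaluation of a polynomial in four variables at the generators. -/
noncomputable def Φ : MvPolynomial (Fin 4) ℤ →ₐ[ℤ] R8 := aeval gens

lemma Asub_eq_range : Asub = Φ.range := by
  have hset : ({eV + e'V, xV + x'V, yV + y'V, zV + z'V} : Set R8) = Set.range gens := by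
    ext r
    simp only [Set.mem_insert_iff, Set.mem_singleton_iff, Set.mem_range]
    constructor
    · rintro (rfl | rfl | rfl | rfl)
      exacts [⟨0, rfl⟩, ⟨1, rfl⟩, ⟨2, rfl⟩, ⟨3, rfl⟩]
    · rintro ⟨i, rfl⟩
      fin_cases i <;> simp [gens]
  rw [Asub, hset, Algebra.adjoin_range_eq_range_aeval]
  rfl

/-- A left inverse of `Φ` on variables. -/
noncomputable def back : Q8 → MvPolynomial (Fin 4) ℤ := fun h =>
  if h = a 0 then X 0 else if h = a 1 then X 1 else if h = xa 0 then X 2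
  else if h = xa 3 then X 3 else 0

noncomputable def Ψ : R8 →ₐ[ℤ] MvPolynomial (Fin 4) ℤ := aeval back

lemma Psi_Phi (q : MvPolynomial (Fin 4) ℤ) : Ψ (Φ q) = q := by
  have h : Ψ.comp Φ = AlgHom.id ℤ (MvPolynomial (Fin 4) ℤ) := by
    apply MvPolynomial.algHom_ext
    intro i
    fin_cases i <;>
      simp [Φ, Ψ, gens, back, eV, e'V, xV, x'V, yV, y'V, zV, z'V,
        show ¬((2:ZMod 4) = 0) from by decide, show ¬((2:ZMod 4) = 1) from by decide,
        show ¬((1:ZMod 4) = 0) from by decide, show ¬((3:ZMod 4) = 0) from by decide,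
        show ¬((3:ZMod 4) = 1) from by decide, show ¬((2:ZMod 4) = 3) from by decide,
        show ¬((1:ZMod 4) = 3) from by decide,
        show ¬((a 2 : Q8) = 1) from by decide, show ¬((a 1 : Q8) = 1) from by decide,
        show ¬((a 3 : Q8) = 1) from by decide, show ¬((xa 0 : Q8) = 1) from by decide,
        show ¬((xa 2 : Q8) = 1) from by decide, show ¬((xa 3 : Q8) = 1) from by decide,
        show ¬((xa 1 : Q8) = 1) from by decide]
  calc Ψ (Φ q) = (Ψ.comp Φ) q := rfl
    _ = q := by rw [h]; rfl

lemma Phi_inj : Function.Injective Φ :=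
  Function.LeftInverse.injective Psi_Phi

lemma gens_hom (i : Fin 4) : (gens i).IsHomogeneous 1 := by
  fin_cases i <;>
    exact (isHomogeneous_X _ _).add (isHomogeneous_X _ _)

lemma Phi_hom {q : MvPolynomial (Fin 4) ℤ} {n : ℕ} (h : q.IsHomogeneous n) :
    (Φ q).IsHomogeneous n := by
  have := h.aeval gens gens_hom
  rw [one_mul] at this
  convert this using 1
  rw [Φ, aeval_def]

lemma Phi_component (d : ℕ) (q0 : MvPolynomial (Fin 4) ℤ) (h : (Φ q0).IsHomogeneous d) :
    Φ q0 = Φ (homogeneousComponent d q0) := by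
  classical
  set N := q0.totalDegree + 1 with hN
  have hsum : Φ q0 = ∑ n ∈ Finset.range N, Φ (homogeneousComponent n q0) := by
    rw [← map_sum, sum_homogeneousComponent]
  have hcomp : homogeneousComponent d (Φ q0) = Φ q0 := by
    rw [homogeneousComponent_of_mem ((mem_homogeneousSubmodule _ _).mpr h), if_pos rfl]
  have hstep : Φ q0 = ∑ n ∈ Finset.range N,
      homogeneousComponent d (Φ (homogeneousComponent n q0)) := by
    conv_lhs => rw [← hcomp, hsum]
    rw [map_sum]
  have heach : ∀ n ∈ Finset.range N,
      homogeneousComponent d (Φ (homogeneousComponent n q0))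
        = if d = n then Φ (homogeneousComponent n q0) else 0 := by
    intro n _
    exact homogeneousComponent_of_mem ((mem_homogeneousSubmodule _ _).mpr
      (Phi_hom (homogeneousComponent_isHomogeneous n q0)))
  rw [Finset.sum_congr rfl heach, Finset.sum_ite_eq] at hstep
  by_cases hdN : d ∈ Finset.range N
  · rw [if_pos hdN] at hstep; exact hstep
  · rw [if_neg hdN] at hstep
    have hz : homogeneousComponent d q0 = 0 := by
      apply homogeneousComponent_eq_zero
      simpa [hN, Nat.lt_succ_iff, not_le] using
        (by simpa [Finset.mem_range] using hdN : ¬ d < N)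
    rw [hz, map_zero, hstep]

/-- A linear-order key for exponent vectors on `Fin 4`. -/
noncomputable def key (m : Fin 4 →₀ ℕ) : ℕ ×ₗ (ℕ ×ₗ (ℕ ×ₗ ℕ)) :=
  toLex (m 0, toLex (m 1, toLex (m 2, m 3)))

lemma key_inj : Function.Injective key := by
  intro m m' h
  have h' := congrArg ofLex h
  simp only [key, ofLex_toLex, Prod.mk.injEq] at h'
  obtain ⟨h0, h1⟩ := h'
  have h1' := congrArg ofLex h1
  simp only [ofLex_toLex, Prod.mk.injEq] at h1'
  obtain ⟨h1, h2⟩ := h1'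
  have h2' := congrArg ofLex h2
  simp only [ofLex_toLex, Prod.mk.injEq] at h2'
  obtain ⟨h2, h3⟩ := h2'
  ext a
  fin_cases a <;> assumption

lemma split_lemma (τ : Fin 4 → Fin 4) (hτ : Function.Involutive τ)
    (d : ℕ) (q : MvPolynomial (Fin 4) ℤ) (hq : q.IsHomogeneous d)
    (hqi : rename τ q = q)
    (hfix : ∀ m : Fin 4 →₀ ℕ, m ∈ q.support → Finsupp.mapDomain τ m ≠ m) :
    ∃ r : MvPolynomial (Fin 4) ℤ, r.IsHomogeneous d ∧ q = r + rename τ r := by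
  classical
  set σ : (Fin 4 →₀ ℕ) → (Fin 4 →₀ ℕ) := Finsupp.mapDomain τ with hσ
  have hτinj : Function.Injective τ := hτ.injective
  have hσinv : ∀ m, σ (σ m) = m := by
    intro m
    rw [hσ, ← Finsupp.mapDomain_comp]
    simpa [hτ.comp_self] using Finsupp.mapDomain_id
  have hstab : ∀ m, coeff (σ m) q = coeff m q := by
    intro m
    conv_lhs => rw [← hqi]
    exact coeff_rename_mapDomain τ hτinj q m
  set S := q.support with hS
  set T := S.filter (fun m => key m < key (σ m)) with hT
  set r : MvPolynomial (Fin 4) ℤ := ∑ m ∈ T, monomial m (coeff m q) with hr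
  have hTS : ∀ m ∈ T, m ∈ S := fun m hm => (Finset.mem_filter.mp hm).1
  refine ⟨r, ?_, ?_⟩
  · apply IsHomogeneous.sum
    intro m hm
    apply isHomogeneous_monomial
    have := hq (Finsupp.mem_support_iff.mp (hTS m hm))
    rwa [Finsupp.degree_eq_weight_one]
  · have hren : rename τ r = ∑ m ∈ T, monomial (σ m) (coeff m q) := by
      rw [hr, map_sum]
      exact Finset.sum_congr rfl fun m _ => rename_monomial τ m _
    rw [hren]
    conv_lhs => rw [← support_sum_monomial_coeff q]
    rw [← hS, ← Finset.sum_filter_add_sum_filter_not S (fun m => key m < key (σ m)), ← hT]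
    congr 1
    apply Finset.sum_nbij' (fun m => σ m) (fun m => σ m)
    · intro m hm
      obtain ⟨hmS, hmc⟩ := Finset.mem_filter.mp hm
      refine Finset.mem_filter.mpr ⟨?_, ?_⟩
      · exact Finsupp.mem_support_iff.mpr ((hstab m).trans_ne (Finsupp.mem_support_iff.mp hmS))
      · rw [hσinv]
        rcases lt_trichotomy (key (σ m)) (key m) with h | h | h
        · exact h
        · exact absurd (key_inj h) (hfix m hmS)
        · exact absurd h hmc
    · intro m hm
      obtain ⟨hmS, hmc⟩ := Finset.mem_filter.mp hm
      refine Finset.mem_filter.mpr ⟨?_, ?_⟩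
      · exact Finsupp.mem_support_iff.mpr ((hstab m).trans_ne (Finsupp.mem_support_iff.mp hmS))
      · rw [hσinv]
        exact not_lt.mpr (le_of_lt hmc)
    · intro m _; exact hσinv m
    · intro m _; exact hσinv m
    · intro m hm
      rw [hstab, hσinv]

lemma degree_four (m : Fin 4 →₀ ℕ) : Finsupp.degree m = m 0 + m 1 + m 2 + m 3 := by
  change ∑ i ∈ m.support, m i = _
  rw [Finset.sum_subset (Finset.subset_univ _)
    (fun x _ hx => Finsupp.notMem_support_iff.mp hx), Fin.sum_univ_four]

lemma apply_of_fixed {τ : Fin 4 → Fin 4} (hτinj : Function.Injective τ)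
    {m : Fin 4 →₀ ℕ} (hm : Finsupp.mapDomain τ m = m) (a : Fin 4) : m (τ a) = m a := by
  conv_lhs => rw [← hm]
  exact Finsupp.mapDomain_apply hτinj m a

lemma main_aux (g : Q8) (τ : Fin 4 → Fin 4) (hτ : Function.Involutive τ)
    (hcomm : (act g).comp Φ = Φ.comp (rename τ))
    (hfixd : ∀ m : Fin 4 →₀ ℕ, Finsupp.mapDomain τ m = m → ¬ Odd (Finsupp.degree m))
    (d : ℕ) (hd : d = 1 ∨ d = 3) (p : R8) (hpA : p ∈ Asub) (hph : p.IsHomogeneous d)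
    (hact : act g p = p) :
    ∃ u ∈ Asub, u.IsHomogeneous d ∧ MvPolynomial.constantCoeff u = 0 ∧
      p = u + act g u := by
  have hodd : Odd d := by rcases hd with rfl | rfl <;> decide
  obtain ⟨q0, hq0⟩ : ∃ q0, Φ q0 = p := by
    have := Asub_eq_range ▸ hpA
    exact this
  set q := homogeneousComponent d q0 with hqdef
  have hq : Φ q = p := by
    rw [hqdef, ← Phi_component d q0 (hq0 ▸ hph), hq0]
  have hqh : q.IsHomogeneous d := homogeneousComponent_isHomogeneous d q0
  have hqi : rename τ q = q := by
    apply Phi_inj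
    have h1 : Φ (rename τ q) = act g (Φ q) := by
      have := congrArg (fun F : MvPolynomial (Fin 4) ℤ →ₐ[ℤ] R8 => F q) hcomm
      simpa using this.symm
    rw [h1, hq, hact]
  have hfix : ∀ m : Fin 4 →₀ ℕ, m ∈ q.support → Finsupp.mapDomain τ m ≠ m := by
    intro m hms heq
    apply hfixd m heq
    have hdm : Finsupp.degree m = d := by
      rw [Finsupp.degree_eq_weight_one]
      exact hqh (Finsupp.mem_support_iff.mp hms)
    rwa [hdm]
  obtain ⟨r, hrh, hrq⟩ := split_lemma τ hτ d q hqh hqi hfix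
  refine ⟨Φ r, ?_, Phi_hom hrh, ?_, ?_⟩
  · rw [Asub_eq_range]
    exact ⟨r, rfl⟩
  · have h0 : Finsupp.degree (0 : Q8 →₀ ℕ) ≠ d := by
      rw [map_zero]
      rcases hd with rfl | rfl <;> norm_num
    have := (Phi_hom hrh).coeff_eq_zero h0
    rwa [MvPolynomial.constantCoeff_eq] at *
  · have h2 : act g (Φ r) = Φ (rename τ r) := by
      have := congrArg (fun F : MvPolynomial (Fin 4) ℤ →ₐ[ℤ] R8 => F r) hcomm
      simpa using this
    rw [← hq, hrq, map_add, h2]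

/-- Let `g ∈ {i, j, k}` and let `H = {1, −1, g, −g}` be the corresponding
cyclic subgroup of order `4` of `Q₈` (the subgroup generated by `g`).  For `d ∈ {1, 3}`,
every homogeneous element of degree `d` of the subalgebra `A` that is fixed by the
action of every element of `H` can be written as `u + g·u` for some homogeneous element
`u ∈ A` of degree `d` with zero constant term. -/
theorem stmt12 (g : Q8) (hg : g = a 1 ∨ g = xa 0 ∨ g = xa 3)
    (d : ℕ) (hd : d = 1 ∨ d = 3) (p : R8) (hpA : p ∈ Asub)
    (hph : p.IsHomogeneous d)
    (hinv : ∀ h ∈ Subgroup.zpowers g, act h p = p) :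
    ∃ u ∈ Asub, u.IsHomogeneous d ∧ MvPolynomial.constantCoeff u = 0 ∧
      p = u + act g u := by
  have hact : act g p = p := hinv g (Subgroup.mem_zpowers g)
  rcases hg with rfl | rfl | rfl
  · refine main_aux _ ![1, 0, 3, 2] (fun x => by fin_cases x <;> rfl) ?_ ?_ d hd p hpA hph hact
    · apply MvPolynomial.algHom_ext
      intro i
      fin_cases i <;>
        simp [Φ, act, gens, eV, e'V, xV, x'V, yV, y'V, zV, z'V,
          show (a 1 : Q8) * a 0 = a 1 from by decide, show (a 1 : Q8) * a 2 = a 3 from by decide,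
          show (a 1 : Q8) * a 1 = a 2 from by decide, show (a 1 : Q8) * a 3 = a 0 from by decide,
          show (a 1 : Q8) * xa 0 = xa 3 from by decide, show (a 1 : Q8) * xa 2 = xa 1 from by decide,
          show (a 1 : Q8) * xa 3 = xa 2 from by decide, show (a 1 : Q8) * xa 1 = xa 0 from by decide] <;>
        try ring
    · intro m hm hodd
      have hinj : Function.Injective (![1, 0, 3, 2] : Fin 4 → Fin 4) := by decide
      have h1 : m 1 = m 0 := by simpa using apply_of_fixed hinj hm 0
      have h3 : m 3 = m 2 := by simpa using apply_of_fixed hinj hm 2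
      rw [degree_four] at hodd
      obtain ⟨t, ht⟩ := hodd
      omega
  · refine main_aux _ ![2, 3, 0, 1] (fun x => by fin_cases x <;> rfl) ?_ ?_ d hd p hpA hph hact
    · apply MvPolynomial.algHom_ext
      intro i
      fin_cases i <;>
        simp [Φ, act, gens, eV, e'V, xV, x'V, yV, y'V, zV, z'V,
          show (xa 0 : Q8) * a 0 = xa 0 from by decide, show (xa 0 : Q8) * a 2 = xa 2 from by decide,
          show (xa 0 : Q8) * a 1 = xa 1 from by decide, show (xa 0 : Q8) * a 3 = xa 3 from by decide,
          show (xa 0 : Q8) * xa 0 = a 2 from by decide, show (xa 0 : Q8) * xa 2 = a 0 from by decide,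
          show (xa 0 : Q8) * xa 3 = a 1 from by decide, show (xa 0 : Q8) * xa 1 = a 3 from by decide] <;>
        try ring
    · intro m hm hodd
      have hinj : Function.Injective (![2, 3, 0, 1] : Fin 4 → Fin 4) := by decide
      have h1 : m 2 = m 0 := by simpa using apply_of_fixed hinj hm 0
      have h3 : m 3 = m 1 := by simpa using apply_of_fixed hinj hm 1
      rw [degree_four] at hodd
      obtain ⟨t, ht⟩ := hodd
      omega
  · refine main_aux _ ![3, 2, 1, 0] (fun x => by fin_cases x <;> rfl) ?_ ?_ d hd p hpA hph hact
    · apply MvPolynomial.algHom_ext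
      intro i
      fin_cases i <;>
        simp [Φ, act, gens, eV, e'V, xV, x'V, yV, y'V, zV, z'V,
          show (xa 3 : Q8) * a 0 = xa 3 from by decide, show (xa 3 : Q8) * a 2 = xa 1 from by decide,
          show (xa 3 : Q8) * a 1 = xa 0 from by decide, show (xa 3 : Q8) * a 3 = xa 2 from by decide,
          show (xa 3 : Q8) * xa 0 = a 3 from by decide, show (xa 3 : Q8) * xa 2 = a 1 from by decide,
          show (xa 3 : Q8) * xa 3 = a 2 from by decide, show (xa 3 : Q8) * xa 1 = a 0 from by decide] <;>
        try ring
    · intro m hm hodd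
      have hinj : Function.Injective (![3, 2, 1, 0] : Fin 4 → Fin 4) := by decide
      have h1 : m 3 = m 0 := by simpa using apply_of_fixed hinj hm 0
      have h3 : m 2 = m 1 := by simpa using apply_of_fixed hinj hm 1
      rw [degree_four] at hodd
      obtain ⟨t, ht⟩ := hodd
      omega
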